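/- For all n ≥ 3, the chromatic index (edge chromatic number) of the parity-constrained Hanoi graph P^n equals 5; in fact, partitioning edges by the unordered pair of pegs involved in the move ({0,1},{0,2},{0,3},{1,3},{2,3}) gives a proper 5-edge-coloring in which each color class is a matching. -/

import Mathlib

/-- Parity constraint on a state: disc `d+1` (labelled `1,…,n`) may not sit on
peg `2` if it is even, nor on peg `1` if it is odd. -/
def pegOK (n : ℕ) (s : Fin n → Fin 4) : Prop :=
  ∀ d : Fin n, (Even ((d : ℕ) + 1) → s d ≠ 2) ∧ (Odd ((d : ℕ) + 1) → s d ≠ 1)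

instance (n : ℕ) : DecidablePred (pegOK n) := fun s => by
  unfold pegOK; infer_instance

/-- Vertices of the parity-constrained Hanoi graph `P^n`. -/
abbrev PVertex (n : ℕ) := {s : Fin n → Fin 4 // pegOK n s}

/-- The parity-constrained four-peg Hanoi graph `P^n`: two states are adjacent iff
they differ in exactly one coordinate `d` (a legal move of disc `d+1`) and no
smaller disc sits on either of the two pegs involved. -/
def PGraph (n : ℕ) : SimpleGraph (PVertex n) where
  Adj s t := ∃ d : Fin n,
    s.1 d ≠ t.1 d ∧ (∀ k, k ≠ d → s.1 k = t.1 k) ∧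
    (∀ k, k < d → s.1 k ≠ s.1 d ∧ s.1 k ≠ t.1 d)
  symm := by
    constructor
    rintro s t ⟨d, hne, heq, hlt⟩
    refine ⟨d, hne.symm, fun k hk => (heq k hk).symm, fun k hk => ?_⟩
    have h := hlt k hk
    rw [← heq k (ne_of_lt hk)]
    exact ⟨h.2, h.1⟩
  loopless := by constructor; rintro s ⟨d, hne, -⟩; exact hne rfl

instance (n : ℕ) : DecidableRel (PGraph n).Adj := fun s t =>
  decidable_of_iff (∃ d : Fin n,
    s.1 d ≠ t.1 d ∧ (∀ k, k ≠ d → s.1 k = t.1 k) ∧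
    (∀ k, k < d → s.1 k ≠ s.1 d ∧ s.1 k ≠ t.1 d)) Iff.rfl

/-- A proper edge colouring of the edges of `G` with `k` colours: any two distinct
edges sharing a vertex receive different colours. -/
def ProperEdgeColoring {V : Type*} (G : SimpleGraph V) {k : ℕ}
    (f : Sym2 V → Fin k) : Prop :=
  ∀ e ∈ G.edgeSet, ∀ e' ∈ G.edgeSet, e ≠ e' →
    (∃ v, v ∈ e ∧ v ∈ e') → f e ≠ f e'


def pcAux : ℕ → ℕ → Fin 5
  | 0,1 => 0 | 0,2 => 1 | 0,3 => 2 | 1,3 => 3 | 2,3 => 4 | _,_ => 0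

def pc (a b : Fin 4) : Fin 5 := pcAux (min a.val b.val) (max a.val b.val)

lemma pc_comm (a b : Fin 4) : pc a b = pc b a := by
  unfold pc; rw [min_comm, max_comm]

def Good (a b : Fin 4) : Prop := ¬(a = 1 ∧ b = 2) ∧ ¬(a = 2 ∧ b = 1)

instance (a b : Fin 4) : Decidable (Good a b) := by unfold Good; infer_instance

lemma pc_inj : ∀ a b a' b' : Fin 4, a ≠ b → a' ≠ b' → Good a b → Good a' b' →
    pc a b = pc a' b' → (a = a' ∧ b = b') ∨ (a = b' ∧ b = a') := by decide

lemma fin4pigeon : ∀ a b c d e : Fin 4,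
    a = b ∨ a = c ∨ a = d ∨ a = e ∨ b = c ∨ b = d ∨ b = e ∨ c = d ∨ c = e ∨ d = e := by
  decide

variable {n : ℕ}

def diffSet (s t : PVertex n) : Finset (Fin n) :=
  Finset.univ.filter (fun d => s.1 d ≠ t.1 d)

lemma diffSet_comm (s t : PVertex n) : diffSet s t = diffSet t s := by
  unfold diffSet
  apply Finset.filter_congr
  intro x _
  exact ne_comm

def gcol (s t : PVertex n) : Fin 5 :=
  if h : (diffSet s t).Nonempty then
    pc (s.1 ((diffSet s t).min' h)) (t.1 ((diffSet s t).min' h)) else 0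

lemma gcol_comm (s t : PVertex n) : gcol s t = gcol t s := by
  unfold gcol
  rw [diffSet_comm s t]
  split
  · exact pc_comm _ _
  · rfl

def EC (n : ℕ) : Sym2 (PVertex n) → Fin 5 := Sym2.lift ⟨gcol, gcol_comm⟩

lemma EC_mk (s t : PVertex n) (d : Fin n) (hd : s.1 d ≠ t.1 d)
    (heq : ∀ k, k ≠ d → s.1 k = t.1 k) : EC n s(s,t) = pc (s.1 d) (t.1 d) := by
  have hD : diffSet s t = {d} := by
    ext k
    simp only [diffSet, Finset.mem_filter, Finset.mem_univ, true_and, Finset.mem_singleton]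
    constructor
    · intro hk; by_contra hkd; exact hk (heq k hkd)
    · rintro rfl; exact hd
  have hne : (diffSet s t).Nonempty := by rw [hD]; exact ⟨d, Finset.mem_singleton_self d⟩
  have hm : (diffSet s t).min' hne = d := by
    apply le_antisymm
    · apply Finset.min'_le
      rw [hD]; exact Finset.mem_singleton_self d
    · apply Finset.le_min'
      intro y hy
      rw [hD, Finset.mem_singleton] at hy
      exact le_of_eq hy.symm
  show gcol s t = _
  unfold gcol
  rw [dif_pos hne, hm]

lemma good_pegs (s t : PVertex n) (d : Fin n) : Good (s.1 d) (t.1 d) := by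
  rcases Nat.even_or_odd ((d : ℕ) + 1) with h | h
  · exact ⟨fun hh => (t.2 d).1 h hh.2, fun hh => (s.2 d).1 h hh.1⟩
  · exact ⟨fun hh => (s.2 d).2 h hh.1, fun hh => (t.2 d).2 h hh.2⟩

lemma key (v t t' : PVertex n) (h1 : (PGraph n).Adj v t) (h2 : (PGraph n).Adj v t')
    (hne : s(v,t) ≠ s(v,t')) : EC n s(v,t) ≠ EC n s(v,t') := by
  obtain ⟨d, hd, heqd, hltd⟩ := h1
  obtain ⟨d', hd', heqd', hltd'⟩ := h2
  rw [EC_mk v t d hd heqd, EC_mk v t' d' hd' heqd']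
  intro hcol
  have hg := pc_inj _ _ _ _ hd hd' (good_pegs v t d) (good_pegs v t' d') hcol
  rcases lt_trichotomy d d' with h | h | h
  · have hc := hltd' d h
    rcases hg with ⟨ha, -⟩ | ⟨ha, -⟩
    · exact hc.1 ha
    · exact hc.2 ha
  · subst h
    rcases hg with ⟨-, hb⟩ | ⟨ha, hb⟩
    · apply hne
      have : t = t' := by
        apply Subtype.ext; funext k
        by_cases hk : k = d
        · subst hk; exact hb
        · rw [← heqd k hk, heqd' k hk]
      rw [this]
    · exact hd hb.symm
  · have hc := hltd d' h
    rcases hg with ⟨ha, -⟩ | ⟨-, hb⟩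
    · exact hc.1 ha.symm
    · exact hc.2 hb.symm

lemma EC_proper (n : ℕ) : ProperEdgeColoring (PGraph n) (EC n) := by
  intro e he e' he' hne hv
  induction e using Sym2.ind with | _ a b =>
  induction e' using Sym2.ind with | _ a' b' =>
  obtain ⟨v, hv1, hv2⟩ := hv
  rw [SimpleGraph.mem_edgeSet] at he he'
  rw [Sym2.mem_iff] at hv1 hv2
  rcases hv1 with rfl | rfl <;> rcases hv2 with rfl | rfl
  · exact key _ _ _ he he' hne
  · rw [Sym2.eq_swap (a := a') (b := v)] at hne ⊢
    exact key _ _ _ he he'.symm hne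
  · rw [Sym2.eq_swap (a := a) (b := v)] at hne ⊢
    exact key _ _ _ he.symm he' hne
  · rw [Sym2.eq_swap (a := a) (b := v)] at hne ⊢
    rw [Sym2.eq_swap (a := a') (b := v)] at hne ⊢
    exact key _ _ _ he.symm he'.symm hne

def baseF (n : ℕ) : Fin n → Fin 4 := fun d =>
  if (d : ℕ) = 0 then 2 else if (d : ℕ) = 1 then 1 else if (d : ℕ) = 2 then 0 else 3

lemma baseF_OK (n : ℕ) : pegOK n (baseF n) := by
  rintro ⟨dv, hdv⟩
  simp only [baseF, Fin.val_mk]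
  match dv with
  | 0 => refine ⟨fun h => absurd h (by decide), fun _ => ?_⟩; simp
  | 1 => refine ⟨fun _ => ?_, fun h => absurd h (by decide)⟩; simp
  | 2 => refine ⟨fun h => absurd h (by decide), fun _ => ?_⟩; simp
  | (k+3) =>
    refine ⟨fun _ => ?_, fun _ => ?_⟩ <;>
      rw [if_neg (by omega), if_neg (by omega), if_neg (by omega)] <;> decide

def modF (n : ℕ) (i : ℕ) (x : Fin 4) : Fin n → Fin 4 := fun d =>
  if (d : ℕ) = i then x else baseF n d

lemma modF_OK (n : ℕ) (i : ℕ) (x : Fin 4)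
    (hx : (Even (i + 1) → x ≠ 2) ∧ (Odd (i + 1) → x ≠ 1)) : pegOK n (modF n i x) := by
  intro d
  unfold modF
  by_cases h : (d : ℕ) = i
  · rw [if_pos h, h]; exact hx
  · rw [if_neg h]; exact baseF_OK n d

def V0 (n : ℕ) : PVertex n := ⟨baseF n, baseF_OK n⟩

lemma adjN (n : ℕ) (i : ℕ) (hi : i < n) (x : Fin 4) (hOK : pegOK n (modF n i x))
    (hx : baseF n ⟨i, hi⟩ ≠ x)
    (hsm : ∀ k : Fin n, (k : ℕ) < i → baseF n k ≠ baseF n ⟨i, hi⟩ ∧ baseF n k ≠ x) :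
    (PGraph n).Adj (V0 n) ⟨modF n i x, hOK⟩ := by
  have hmod : modF n i x ⟨i, hi⟩ = x := by simp [modF]
  refine ⟨⟨i, hi⟩, ?_, ?_, ?_⟩
  · show baseF n _ ≠ modF n i x _
    rw [hmod]; exact hx
  · intro k hk
    show baseF n k = modF n i x k
    unfold modF
    rw [if_neg (fun h => hk (Fin.ext h))]
  · intro k hk
    have := hsm k hk
    show baseF n k ≠ baseF n ⟨i, hi⟩ ∧ baseF n k ≠ modF n i x ⟨i, hi⟩
    rw [hmod]; exact this

lemma ne_of_app (t t' : PVertex n) (k : Fin n) (h : t.1 k ≠ t'.1 k) : t ≠ t' :=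
  fun e => h (by rw [e])

lemma mkne (v t t' : PVertex n) (h1 : t ≠ t') (h2 : t ≠ v) : s(v,t) ≠ s(v,t') := by
  intro hh
  rw [Sym2.eq_iff] at hh
  rcases hh with ⟨-, h⟩ | ⟨h, h'⟩
  · exact h1 h
  · exact h2 h'

lemma no4 (n : ℕ) (hn : 3 ≤ n) :
    ¬ ∃ f : Sym2 (PVertex n) → Fin 4, ProperEdgeColoring (PGraph n) f := by
  rintro ⟨f, hf⟩
  have h0 : (0 : ℕ) < n := by omega
  have h1 : (1 : ℕ) < n := by omega
  have h2 : (2 : ℕ) < n := by omega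
  have b0 : baseF n ⟨0, h0⟩ = 2 := rfl
  have b1 : baseF n ⟨1, h1⟩ = 1 := rfl
  have b2 : baseF n ⟨2, h2⟩ = 0 := rfl
  -- the five neighbours of V0
  have okA : pegOK n (modF n 0 0) := modF_OK n 0 0 ⟨fun h => absurd h (by decide), fun _ => by decide⟩
  have okB : pegOK n (modF n 0 3) := modF_OK n 0 3 ⟨fun h => absurd h (by decide), fun _ => by decide⟩
  have okC : pegOK n (modF n 1 0) := modF_OK n 1 0 ⟨fun _ => by decide, fun h => absurd h (by decide)⟩
  have okD : pegOK n (modF n 1 3) := modF_OK n 1 3 ⟨fun _ => by decide, fun h => absurd h (by decide)⟩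
  have okE : pegOK n (modF n 2 3) := modF_OK n 2 3 ⟨fun h => absurd h (by decide), fun _ => by decide⟩
  set tA : PVertex n := ⟨modF n 0 0, okA⟩ with htA
  set tB : PVertex n := ⟨modF n 0 3, okB⟩ with htB
  set tC : PVertex n := ⟨modF n 1 0, okC⟩ with htC
  set tD : PVertex n := ⟨modF n 1 3, okD⟩ with htD
  set tE : PVertex n := ⟨modF n 2 3, okE⟩ with htE
  have aA : (PGraph n).Adj (V0 n) tA := by
    refine adjN n 0 h0 0 okA (by rw [b0]; decide) ?_
    intro k hk; exact absurd hk (by omega)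
  have aB : (PGraph n).Adj (V0 n) tB := by
    refine adjN n 0 h0 3 okB (by rw [b0]; decide) ?_
    intro k hk; exact absurd hk (by omega)
  have aC : (PGraph n).Adj (V0 n) tC := by
    refine adjN n 1 h1 0 okC (by rw [b1]; decide) ?_
    intro k hk
    have hk0 : (k : ℕ) = 0 := by omega
    have hb : baseF n k = 2 := by unfold baseF; rw [if_pos hk0]
    rw [hb, b1]
    exact ⟨by decide, by decide⟩
  have aD : (PGraph n).Adj (V0 n) tD := by
    refine adjN n 1 h1 3 okD (by rw [b1]; decide) ?_
    intro k hk
    have hk0 : (k : ℕ) = 0 := by omega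
    have hb : baseF n k = 2 := by unfold baseF; rw [if_pos hk0]
    rw [hb, b1]
    exact ⟨by decide, by decide⟩
  have aE : (PGraph n).Adj (V0 n) tE := by
    refine adjN n 2 h2 3 okE (by rw [b2]; decide) ?_
    intro k hk
    rw [b2]
    rcases (by omega : (k : ℕ) = 0 ∨ (k : ℕ) = 1) with h | h
    · have hb : baseF n k = 2 := by unfold baseF; rw [if_pos h]
      rw [hb]; exact ⟨by decide, by decide⟩
    · have hb : baseF n k = 1 := by unfold baseF; rw [if_neg (by omega), if_pos h]
      rw [hb]; exact ⟨by decide, by decide⟩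
  -- coordinate values
  have vA0 : tA.1 ⟨0, h0⟩ = 0 := rfl
  have vB0 : tB.1 ⟨0, h0⟩ = 3 := rfl
  have vC0 : tC.1 ⟨0, h0⟩ = 2 := rfl
  have vD0 : tD.1 ⟨0, h0⟩ = 2 := rfl
  have vE0 : tE.1 ⟨0, h0⟩ = 2 := rfl
  have vC1 : tC.1 ⟨1, h1⟩ = 0 := rfl
  have vD1 : tD.1 ⟨1, h1⟩ = 3 := rfl
  have vE1 : tE.1 ⟨1, h1⟩ = 1 := rfl
  have vE2 : tE.1 ⟨2, h2⟩ = 3 := rfl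
  have w0 : (V0 n).1 ⟨0, h0⟩ = 2 := b0
  have w1 : (V0 n).1 ⟨1, h1⟩ = 1 := b1
  have w2 : (V0 n).1 ⟨2, h2⟩ = 0 := b2
  -- distinctness of neighbours
  have nAV : tA ≠ V0 n := ne_of_app _ _ ⟨0, h0⟩ (by rw [vA0, w0]; decide)
  have nBV : tB ≠ V0 n := ne_of_app _ _ ⟨0, h0⟩ (by rw [vB0, w0]; decide)
  have nCV : tC ≠ V0 n := ne_of_app _ _ ⟨1, h1⟩ (by rw [vC1, w1]; decide)
  have nDV : tD ≠ V0 n := ne_of_app _ _ ⟨1, h1⟩ (by rw [vD1, w1]; decide)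
  have nEV : tE ≠ V0 n := ne_of_app _ _ ⟨2, h2⟩ (by rw [vE2, w2]; decide)
  have nAB : tA ≠ tB := ne_of_app _ _ ⟨0, h0⟩ (by rw [vA0, vB0]; decide)
  have nAC : tA ≠ tC := ne_of_app _ _ ⟨0, h0⟩ (by rw [vA0, vC0]; decide)
  have nAD : tA ≠ tD := ne_of_app _ _ ⟨0, h0⟩ (by rw [vA0, vD0]; decide)
  have nAE : tA ≠ tE := ne_of_app _ _ ⟨0, h0⟩ (by rw [vA0, vE0]; decide)
  have nBC : tB ≠ tC := ne_of_app _ _ ⟨0, h0⟩ (by rw [vB0, vC0]; decide)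
  have nBD : tB ≠ tD := ne_of_app _ _ ⟨0, h0⟩ (by rw [vB0, vD0]; decide)
  have nBE : tB ≠ tE := ne_of_app _ _ ⟨0, h0⟩ (by rw [vB0, vE0]; decide)
  have nCD : tC ≠ tD := ne_of_app _ _ ⟨1, h1⟩ (by rw [vC1, vD1]; decide)
  have nCE : tC ≠ tE := ne_of_app _ _ ⟨1, h1⟩ (by rw [vC1, vE1]; decide)
  have nDE : tD ≠ tE := ne_of_app _ _ ⟨1, h1⟩ (by rw [vD1, vE1]; decide)
  -- the five edges
  have mA : s(V0 n, tA) ∈ (PGraph n).edgeSet := aA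
  have mB : s(V0 n, tB) ∈ (PGraph n).edgeSet := aB
  have mC : s(V0 n, tC) ∈ (PGraph n).edgeSet := aC
  have mD : s(V0 n, tD) ∈ (PGraph n).edgeSet := aD
  have mE : s(V0 n, tE) ∈ (PGraph n).edgeSet := aE
  have eAB := mkne (V0 n) tA tB nAB nAV
  have eAC := mkne (V0 n) tA tC nAC nAV
  have eAD := mkne (V0 n) tA tD nAD nAV
  have eAE := mkne (V0 n) tA tE nAE nAV
  have eBC := mkne (V0 n) tB tC nBC nBV
  have eBD := mkne (V0 n) tB tD nBD nBV
  have eBE := mkne (V0 n) tB tE nBE nBV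
  have eCD := mkne (V0 n) tC tD nCD nCV
  have eCE := mkne (V0 n) tC tE nCE nCV
  have eDE := mkne (V0 n) tD tE nDE nDV
  have hcom : ∀ t t' : PVertex n, ∃ v, v ∈ s(V0 n, t) ∧ v ∈ s(V0 n, t') :=
    fun t t' => ⟨V0 n, Sym2.mem_mk_left _ _, Sym2.mem_mk_left _ _⟩
  rcases fin4pigeon (f s(V0 n, tA)) (f s(V0 n, tB)) (f s(V0 n, tC)) (f s(V0 n, tD))
      (f s(V0 n, tE)) with h|h|h|h|h|h|h|h|h|h
  · exact hf _ mA _ mB eAB (hcom _ _) h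
  · exact hf _ mA _ mC eAC (hcom _ _) h
  · exact hf _ mA _ mD eAD (hcom _ _) h
  · exact hf _ mA _ mE eAE (hcom _ _) h
  · exact hf _ mB _ mC eBC (hcom _ _) h
  · exact hf _ mB _ mD eBD (hcom _ _) h
  · exact hf _ mB _ mE eBE (hcom _ _) h
  · exact hf _ mC _ mD eCD (hcom _ _) h
  · exact hf _ mC _ mE eCE (hcom _ _) h
  · exact hf _ mD _ mE eDE (hcom _ _) h


/-- For `n ≥ 3` the chromatic index of `P^n` equals `5`: there is a proper
`5`-edge-colouring but no proper `4`-edge-colouring. -/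
theorem stmt18 : ∀ n : ℕ, 3 ≤ n →
    (∃ f : Sym2 (PVertex n) → Fin 5, ProperEdgeColoring (PGraph n) f) ∧
    ¬ ∃ f : Sym2 (PVertex n) → Fin 4, ProperEdgeColoring (PGraph n) f := by
  intro n hn
  exact ⟨⟨EC n, EC_proper n⟩, no4 n hn⟩
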